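/- Let S be a finite set, let Q_0 be a d×d real symmetric positive definite matrix, and for each s ∈ S let Q_s be a d×d real symmetric positive semidefinite matrix. Then the function f : 2^S → ℝ defined by f(A) = log det(Q_0 + ∑_{s∈A} Q_s) − log det(Q_0) is normalized (f(∅) = 0), monotone (f(A) ≤ f(B) whenever A ⊆ B ⊆ S), and submodular (f(A ∪ {s}) − f(A) ≥ f(B ∪ {s}) − f(B) for all A ⊆ B ⊆ S and s ∈ S \ B). -/

import Mathlib

open Finset Matrix

section Aux

open scoped MatrixOrder

variable {n : Type*} [Fintype n] [DecidableEq n]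

lemma aux_one_le_det_one_add {A : Matrix n n ℝ} (hA : A.PosSemidef) :
    1 ≤ (1 + A).det := by
  have hH := hA.isHermitian
  set U := (hH.eigenvectorUnitary : Matrix n n ℝ) with hUdef
  have hU : U * star U = 1 := Matrix.mem_unitaryGroup_iff.mp hH.eigenvectorUnitary.2
  set D : Matrix n n ℝ := Matrix.diagonal (RCLike.ofReal ∘ hH.eigenvalues) with hDdef
  have hdecomp : 1 + A = U * (1 + D) * star U := by
    rw [mul_add, add_mul, mul_one, hU]
    congr 1
    exact hH.spectral_theorem
  rw [hdecomp, Matrix.det_mul_right_comm, hU, one_mul]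
  have h1 : (1 : Matrix n n ℝ) + D = Matrix.diagonal (fun i => 1 + hH.eigenvalues i) := by
    rw [hDdef, ← Matrix.diagonal_one, Matrix.diagonal_add]
    rfl
  rw [h1, Matrix.det_diagonal]
  calc (1:ℝ) = ∏ _i : n, 1 := by simp
    _ ≤ ∏ i : n, (1 + hH.eigenvalues i) :=
        Finset.prod_le_prod (fun i _ => zero_le_one)
          (fun i _ => by have := hA.eigenvalues_nonneg i; linarith)

lemma aux_det_le_det_add {M P : Matrix n n ℝ} (hM : M.PosDef) (hP : P.PosSemidef) :
    M.det ≤ (M + P).det := by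
  set S := CFC.sqrt M with hSdef
  have hSS : S * S = M := CFC.sqrt_mul_sqrt_self M hM.posSemidef.nonneg
  have hSH : S.IsHermitian := (CFC.sqrt_nonneg M).posSemidef.isHermitian
  have hdet : S.det * S.det = M.det := by rw [← Matrix.det_mul, hSS]
  have hSd : S.det ≠ 0 := by
    intro h; rw [h, mul_zero] at hdet; exact (ne_of_gt hM.det_pos) hdet.symm
  have hSinv : S * S⁻¹ = 1 := Matrix.mul_nonsing_inv S (isUnit_iff_ne_zero.mpr hSd)
  have hinvS : S⁻¹ * S = 1 := Matrix.nonsing_inv_mul S (isUnit_iff_ne_zero.mpr hSd)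
  have hSinvH : (S⁻¹)ᴴ = S⁻¹ := by rw [Matrix.conjTranspose_nonsing_inv, hSH.eq]
  set C := S⁻¹ * P * S⁻¹ with hCdef
  have hC : C.PosSemidef := by
    have := hP.conjTranspose_mul_mul_same S⁻¹
    rwa [hSinvH] at this
  have hfac : M + P = S * (1 + C) * S := by
    have h1 : S * (S⁻¹ * P * S⁻¹) * S = (S * S⁻¹) * P * (S⁻¹ * S) := by noncomm_ring
    rw [mul_add, add_mul, mul_one, hSS, hCdef, h1, hSinv, hinvS, one_mul, mul_one]
  rw [hfac, Matrix.det_mul, Matrix.det_mul]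
  have h1 := aux_one_le_det_one_add hC
  nlinarith [hM.det_pos]

lemma aux_core {P R : Matrix n n ℝ} (hP : P.PosSemidef) (hR : R.PosSemidef) :
    (1 + P + R).det ≤ (1 + P).det * (1 + R).det := by
  set U := CFC.sqrt R with hUdef
  have hUU : U * U = R := CFC.sqrt_mul_sqrt_self R hR.nonneg
  have hUH : U.IsHermitian := (CFC.sqrt_nonneg R).posSemidef.isHermitian
  have hT : ((1 : Matrix n n ℝ) + P).PosDef := Matrix.PosDef.one.add_posSemidef hP
  set T : Matrix n n ℝ := 1 + P with hTdef
  have hTd : T.det ≠ 0 := ne_of_gt hT.det_pos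
  have hTinv : T * T⁻¹ = 1 := Matrix.mul_nonsing_inv T (isUnit_iff_ne_zero.mpr hTd)
  have hinvT : T⁻¹ * T = 1 := Matrix.nonsing_inv_mul T (isUnit_iff_ne_zero.mpr hTd)
  have hTinvH : (T⁻¹)ᴴ = T⁻¹ := by
    rw [Matrix.conjTranspose_nonsing_inv, hT.isHermitian.eq]
  set W := U * T⁻¹ * U with hWdef
  have hW : W.PosSemidef := by
    rw [hWdef]
    have := (hT.posSemidef.inv).conjTranspose_mul_mul_same U
    rwa [hUH.eq] at this
  have step1 : (T + R).det = T.det * (1 + T⁻¹ * R).det := by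
    rw [← Matrix.det_mul]
    congr 1
    rw [mul_add, mul_one, ← Matrix.mul_assoc, hTinv, one_mul]
  have step2 : (1 + T⁻¹ * R).det = (1 + W).det := by
    have h1 : T⁻¹ * R = (T⁻¹ * U) * U := by rw [Matrix.mul_assoc, hUU]
    have h2 : U * (T⁻¹ * U) = W := by rw [hWdef]; noncomm_ring
    rw [h1, Matrix.det_one_add_mul_comm, h2]
  have hPP : (P + P * P).PosSemidef := by
    have h2 : (P * P).PosSemidef := by
      have := Matrix.posSemidef_conjTranspose_mul_self P
      rwa [hP.isHermitian.eq] at this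
    exact hP.add h2
  have key : T⁻¹ * (P + P * P) * T⁻¹ = 1 - T⁻¹ := by
    have h2 : P * T⁻¹ = 1 - T⁻¹ := by
      have h3 := hTinv
      rw [hTdef, add_mul, one_mul] at h3
      linear_combination (norm := noncomm_ring) h3
    have h1 : T⁻¹ * (P + P * P) * T⁻¹ = (T⁻¹ * T) * (P * T⁻¹) := by
      rw [hTdef]; noncomm_ring
    rw [h1, hinvT, one_mul, h2]
  have hsub : (R - W).PosSemidef := by
    have h := hPP.conjTranspose_mul_mul_same (T⁻¹ * U)
    have hcE : (T⁻¹ * U)ᴴ = U * T⁻¹ := by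
      rw [Matrix.conjTranspose_mul, hTinvH, hUH.eq]
    rw [hcE] at h
    have heq : U * T⁻¹ * (P + P * P) * (T⁻¹ * U) = R - W := by
      have h1 : U * T⁻¹ * (P + P * P) * (T⁻¹ * U)
          = U * (T⁻¹ * (P + P * P) * T⁻¹) * U := by noncomm_ring
      rw [h1, key, mul_sub, sub_mul, mul_one, hUU, hWdef]
    rwa [heq] at h
  have step3 : (1 + W).det ≤ (1 + R).det := by
    have h1 : (1 : Matrix n n ℝ) + R = (1 + W) + (R - W) := by abel
    rw [h1]
    exact aux_det_le_det_add (Matrix.PosDef.one.add_posSemidef hW) hsub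
  calc (T + R).det = T.det * (1 + T⁻¹ * R).det := step1
    _ = T.det * (1 + W).det := by rw [step2]
    _ ≤ T.det * (1 + R).det := by
        have := hT.det_pos
        nlinarith

lemma aux_key {M P R : Matrix n n ℝ} (hM : M.PosDef) (hP : P.PosSemidef)
    (hR : R.PosSemidef) :
    (M + P + R).det * M.det ≤ (M + P).det * (M + R).det := by
  set S := CFC.sqrt M with hSdef
  have hSS : S * S = M := CFC.sqrt_mul_sqrt_self M hM.posSemidef.nonneg
  have hSH : S.IsHermitian := (CFC.sqrt_nonneg M).posSemidef.isHermitian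
  have hdet : S.det * S.det = M.det := by rw [← Matrix.det_mul, hSS]
  have hSd : S.det ≠ 0 := by
    intro h; rw [h, mul_zero] at hdet; exact (ne_of_gt hM.det_pos) hdet.symm
  have hSinv : S * S⁻¹ = 1 := Matrix.mul_nonsing_inv S (isUnit_iff_ne_zero.mpr hSd)
  have hinvS : S⁻¹ * S = 1 := Matrix.nonsing_inv_mul S (isUnit_iff_ne_zero.mpr hSd)
  have hSinvH : (S⁻¹)ᴴ = S⁻¹ := by rw [Matrix.conjTranspose_nonsing_inv, hSH.eq]
  have hfac : ∀ X : Matrix n n ℝ, M + X = S * (1 + S⁻¹ * X * S⁻¹) * S := by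
    intro X
    have h1 : S * (S⁻¹ * X * S⁻¹) * S = (S * S⁻¹) * X * (S⁻¹ * S) := by noncomm_ring
    rw [mul_add, add_mul, mul_one, hSS, h1, hSinv, hinvS, one_mul, mul_one]
  have hCpsd : ∀ X : Matrix n n ℝ, X.PosSemidef → (S⁻¹ * X * S⁻¹).PosSemidef := by
    intro X hX
    have := hX.conjTranspose_mul_mul_same S⁻¹
    rwa [hSinvH] at this
  have hsum : S⁻¹ * (P + R) * S⁻¹ = S⁻¹ * P * S⁻¹ + S⁻¹ * R * S⁻¹ := by noncomm_ring
  have hcore := aux_core (hCpsd P hP) (hCpsd R hR)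
  have e1 : M + P + R = M + (P + R) := by abel
  rw [e1, hfac (P + R), hfac P, hfac R, Matrix.det_mul, Matrix.det_mul, Matrix.det_mul,
    Matrix.det_mul, Matrix.det_mul, Matrix.det_mul, hsum, ← add_assoc]
  rw [← hdet]
  have h4 : (0:ℝ) ≤ (S.det * S.det) * (S.det * S.det) := mul_nonneg (mul_self_nonneg _) (mul_self_nonneg _)
  have h5 := mul_le_mul_of_nonneg_left hcore h4
  nlinarith [h5]

end Aux

/-- The log-det objective from the sensor-fusion example is normalized, monotone and
submodular. -/
theorem stmt13 {α : Type*} [Fintype α] [DecidableEq α] (d : ℕ)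
    (Q0 : Matrix (Fin d) (Fin d) ℝ) (hQ0 : Q0.PosDef)
    (Q : α → Matrix (Fin d) (Fin d) ℝ) (hQ : ∀ s, (Q s).PosSemidef) :
    let f : Finset α → ℝ := fun A => Real.log (Q0 + ∑ s ∈ A, Q s).det - Real.log Q0.det
    f ∅ = 0 ∧ (∀ A B : Finset α, A ⊆ B → f A ≤ f B) ∧
      (∀ A B : Finset α, A ⊆ B → ∀ s ∉ B,
        f (insert s A) - f A ≥ f (insert s B) - f B) := by
  intro f
  have hQA : ∀ A : Finset α, (∑ s ∈ A, Q s).PosSemidef := fun A =>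
    Finset.sum_induction Q _ (fun a b ha hb => ha.add hb) Matrix.PosSemidef.zero
      (fun s _ => hQ s)
  have hpos : ∀ A : Finset α, (Q0 + ∑ s ∈ A, Q s).PosDef := fun A =>
    hQ0.add_posSemidef (hQA A)
  refine ⟨by simp [f], ?_, ?_⟩
  · intro A B hAB
    have e : Q0 + ∑ s ∈ B, Q s = (Q0 + ∑ s ∈ A, Q s) + ∑ s ∈ B \ A, Q s := by
      rw [← Finset.sum_sdiff hAB]; abel
    have hle : (Q0 + ∑ s ∈ A, Q s).det ≤ (Q0 + ∑ s ∈ B, Q s).det := by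
      rw [e]; exact aux_det_le_det_add (hpos A) (hQA _)
    have := Real.log_le_log (hpos A).det_pos hle
    simp only [f]
    linarith
  · intro A B hAB s hs
    have hsA : s ∉ A := fun h => hs (hAB h)
    have e1 : Q0 + ∑ t ∈ insert s A, Q t = (Q0 + ∑ t ∈ A, Q t) + Q s := by
      rw [Finset.sum_insert hsA]; abel
    have e2 : Q0 + ∑ t ∈ B, Q t = (Q0 + ∑ t ∈ A, Q t) + ∑ t ∈ B \ A, Q t := by
      rw [← Finset.sum_sdiff hAB]; abel
    have e3 : Q0 + ∑ t ∈ insert s B, Q t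
        = ((Q0 + ∑ t ∈ A, Q t) + ∑ t ∈ B \ A, Q t) + Q s := by
      rw [Finset.sum_insert hs, ← Finset.sum_sdiff hAB]; abel
    set M := Q0 + ∑ t ∈ A, Q t with hM
    have hMpd : M.PosDef := hpos A
    have hMP : (M + ∑ t ∈ B \ A, Q t).PosDef := hMpd.add_posSemidef (hQA _)
    have hMR : (M + Q s).PosDef := hMpd.add_posSemidef (hQ s)
    have hMPR : (M + ∑ t ∈ B \ A, Q t + Q s).PosDef := hMP.add_posSemidef (hQ s)
    have hkey := aux_key hMpd (hQA (B \ A)) (hQ s)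
    have hlog := Real.log_le_log (mul_pos hMPR.det_pos hMpd.det_pos) hkey
    rw [Real.log_mul (ne_of_gt hMPR.det_pos) (ne_of_gt hMpd.det_pos),
      Real.log_mul (ne_of_gt hMP.det_pos) (ne_of_gt hMR.det_pos)] at hlog
    simp only [f, ge_iff_le]
    rw [e1, e2, e3]
    linarith
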